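/- Assume X satisfies condition (A). Let δ₀ > 0 and let f : ℝ → ℝ be a continuous function with lim_{x→−∞} f(x) = −∞, lim_{x→+∞} f(x) = +∞, and inf_{x ≤ y} (f(y) − f(x)) > −δ₀. Then for every h ∈ (0,T), every 𝔽-stopping time τ taking values in [0, T−h), every c₀ > 0, and each j ∈ {−1, 0, 1}, one has P(F_{f(X)}^j(τ, h, δ₀, c₀) | 𝓕_τ) > 0 almost surely, where f(X) denotes the process (f(X_t))_{t∈[0,T]}. -/

import Mathlib

open MeasureTheory Set Filter

noncomputable section

private lemma rat_near {a b t : ℝ} (hab : a < b) (ht : t ∈ Icc a b) {ε : ℝ} (hε : 0 < ε) :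
    ∃ q : ℚ, (q : ℝ) ∈ Ioo a b ∧ |(q : ℝ) - t| < ε := by
  obtain ⟨h1, h2⟩ := ht
  obtain ⟨q, hq1, hq2⟩ := exists_rat_btwn (show max a (t - ε) < min b (t + ε) by
    apply max_lt <;> apply lt_min <;> linarith)
  have hb1 := lt_of_lt_of_le hq2 (min_le_left _ _)
  have hb2 := lt_of_lt_of_le hq2 (min_le_right _ _)
  have ha1 := lt_of_le_of_lt (le_max_left _ _) hq1
  have ha2 := lt_of_le_of_lt (le_max_right _ _) hq1
  refine ⟨q, ⟨ha1, hb1⟩, ?_⟩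
  rw [abs_sub_lt_iff]
  constructor <;> linarith

private lemma forall_le_of_rat {v : ℝ → ℝ} (hv : Continuous v) {A : Set ℝ} {a b : ℝ}
    (hab : a < b) (hA1 : Ioo a b ⊆ A) (hA2 : A ⊆ Icc a b) {B : ℝ}
    (hq : ∀ q : ℚ, (q : ℝ) ∈ A → v q ≤ B) : ∀ t ∈ A, v t ≤ B := by
  intro t ht
  by_contra hB
  push_neg at hB
  have hopen : IsOpen {s : ℝ | B < v s} := isOpen_lt continuous_const hv
  obtain ⟨ε, hε, hball⟩ := Metric.isOpen_iff.mp hopen t hB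
  obtain ⟨q, hqmem, hqnear⟩ := rat_near hab (hA2 ht) hε
  have hlt : B < v q := hball (by rw [Metric.mem_ball, Real.dist_eq]; exact hqnear)
  exact absurd (hq q (hA1 hqmem)) (not_le.mpr hlt)

private lemma measurableSet_sSup_lt {Ω : Type*} [MeasurableSpace Ω]
    (w : Ω → ℝ → ℝ) (hwc : ∀ ω, Continuous (w ω))
    (hwm : ∀ q : ℚ, Measurable fun ω => w ω (q : ℝ))
    (A : Ω → Set ℝ) (a : ℝ) (b : Ω → ℝ)
    (hab : ∀ ω, a < b ω) (hA1 : ∀ ω, Ioo a (b ω) ⊆ A ω) (hA2 : ∀ ω, A ω ⊆ Icc a (b ω))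
    (hAa : ∀ ω, a ∈ A ω)
    (hbdd : ∀ ω, BddAbove (w ω '' A ω))
    (hAq : ∀ q : ℚ, MeasurableSet {ω | (q : ℝ) ∈ A ω}) (δ : ℝ) :
    MeasurableSet {ω | sSup (w ω '' A ω) < δ} := by
  have heq : {ω | sSup (w ω '' A ω) < δ} =
      ⋃ n : ℕ, ⋂ q : ℚ, ({ω | (q : ℝ) ∈ A ω}ᶜ ∪ {ω | w ω q ≤ δ - 1 / (n + 1)}) := by
    ext ω
    simp only [mem_setOf_eq, mem_iUnion, mem_iInter, mem_union, mem_compl_iff]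
    constructor
    · intro hs
      obtain ⟨n, hn⟩ := exists_nat_one_div_lt (sub_pos.mpr hs)
      refine ⟨n, fun q => ?_⟩
      by_cases hqA : (q : ℝ) ∈ A ω
      · exact Or.inr (le_trans (le_csSup (hbdd ω) (mem_image_of_mem _ hqA)) (by linarith))
      · exact Or.inl hqA
    · rintro ⟨n, hn⟩
      have hkey : ∀ t ∈ A ω, w ω t ≤ δ - 1 / (n + 1) := by
        refine forall_le_of_rat (hwc ω) (hab ω) (hA1 ω) (hA2 ω) fun q hq => ?_
        rcases hn q with h | h
        · exact absurd hq h
        · exact h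
      have h0 : (0:ℝ) < 1 / ((n:ℝ) + 1) := by positivity
      have hle : sSup (w ω '' A ω) ≤ δ - 1 / (n + 1) := by
        apply csSup_le ⟨w ω a, mem_image_of_mem _ (hAa ω)⟩
        rintro x ⟨t, ht, rfl⟩
        exact hkey t ht
      linarith
  rw [heq]
  exact MeasurableSet.iUnion fun n => MeasurableSet.iInter fun q =>
    ((hAq q).compl.union (measurableSet_le (hwm q) measurable_const))

private lemma measurableSet_lt_sInf {Ω : Type*} [MeasurableSpace Ω]
    (w : Ω → ℝ → ℝ) (hwc : ∀ ω, Continuous (w ω))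
    (hwm : ∀ q : ℚ, Measurable fun ω => w ω (q : ℝ))
    (A : Ω → Set ℝ) (a : ℝ) (b : Ω → ℝ)
    (hab : ∀ ω, a < b ω) (hA1 : ∀ ω, Ioo a (b ω) ⊆ A ω) (hA2 : ∀ ω, A ω ⊆ Icc a (b ω))
    (hAa : ∀ ω, a ∈ A ω)
    (hbdd : ∀ ω, BddBelow (w ω '' A ω))
    (hAq : ∀ q : ℚ, MeasurableSet {ω | (q : ℝ) ∈ A ω}) (c : ℝ) :
    MeasurableSet {ω | c < sInf (w ω '' A ω)} := by
  have himg : ∀ ω, (fun t => -(w ω t)) '' A ω = -(w ω '' A ω) := by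
    intro ω
    rw [← Set.image_neg_eq_neg, Set.image_image]
  have h := measurableSet_sSup_lt (fun ω t => -(w ω t)) (fun ω => (hwc ω).neg)
      (fun q => (hwm q).neg) A a b hab hA1 hA2 hAa
      (fun ω => by rw [himg ω]; exact bddAbove_neg.mpr (hbdd ω)) hAq (-c)
  convert h using 1
  ext ω
  simp only [mem_setOf_eq, himg ω]
  rw [Real.sInf_def]
  constructor <;> intro <;> linarith

/-- The events `F_X^j(τ, h, δ, c)` from the paper: for `j = 0`,
`{sup_{t∈[0,T−τ)} |X_{τ+t} − X_τ| < δ}`; for `j = 1`,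
`{sup_{t∈[0,h]} (X_{τ+t} − X_τ) < δ} ∩ {sup_{t∈[h,T−τ)} (X_{τ+t} − X_τ) < −c}`; for `j = −1`,
`{inf_{t∈[0,h]} (X_{τ+t} − X_τ) > −δ} ∩ {inf_{t∈[h,T−τ)} (X_{τ+t} − X_τ) > c}`. -/
def FXev {Ω : Type*} (X : ℝ → Ω → ℝ) (T : ℝ) (τ : Ω → ℝ) (h δ c : ℝ) (j : ℤ) : Set Ω :=
  if j = 0 then
    {ω | sSup ((fun t => |X (τ ω + t) ω - X (τ ω) ω|) '' Ico 0 (T - τ ω)) < δ}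
  else if j = 1 then
    {ω | sSup ((fun t => X (τ ω + t) ω - X (τ ω) ω) '' Icc 0 h) < δ ∧
         sSup ((fun t => X (τ ω + t) ω - X (τ ω) ω) '' Ico h (T - τ ω)) < -c}
  else
    {ω | -δ < sInf ((fun t => X (τ ω + t) ω - X (τ ω) ω) '' Icc 0 h) ∧
         c < sInf ((fun t => X (τ ω + t) ω - X (τ ω) ω) '' Ico h (T - τ ω))}

/-- Condition (A) of the paper: for every `h ∈ (0,T)`, every stopping time `τ` with values
in `[0, T−h)`, every `δ > 0`, `c > 0` and each `j ∈ {−1,0,1}`,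
`P(F_X^j(τ,h,δ,c) | ℱ_τ) > 0` almost surely. -/
def CondA {Ω : Type*} {m : MeasurableSpace Ω} (P : Measure Ω) (ℱ : Filtration ℝ m)
    (T : ℝ) (X : ℝ → Ω → ℝ) : Prop :=
  ∀ h ∈ Ioo (0:ℝ) T, ∀ (τ : Ω → ℝ) (hτ : IsStoppingTime ℱ (fun ω => (τ ω : WithTop ℝ))),
    (∀ ω, τ ω ∈ Ico (0:ℝ) (T - h)) →
    ∀ δ > (0:ℝ), ∀ c > (0:ℝ), ∀ j ∈ ({-1, 0, 1} : Set ℤ),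
    ∀ᵐ ω ∂P, 0 < (P[(FXev X T τ h δ c j).indicator (fun _ => (1:ℝ)) |
        hτ.measurableSpace]) ω

/-- Theorem 3.1(a) of the paper: if `X` satisfies condition (A) and `f` is continuous with
`f(−∞) = −∞`, `f(+∞) = +∞` and `inf_{x ≤ y} (f(y) − f(x)) > −δ₀`, then for every
`h ∈ (0,T)`, every stopping time `τ` with values in `[0, T−h)`, every `c₀ > 0` and each
`j ∈ {−1,0,1}`, one has `P(F_{f(X)}^j(τ, h, δ₀, c₀) | ℱ_τ) > 0` almost surely. -/
theorem composition_case_a {Ω : Type*} {m : MeasurableSpace Ω} (P : Measure Ω)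
    [IsProbabilityMeasure P] (ℱ : Filtration ℝ m) (T : ℝ) (hT : 0 < T)
    (X : ℝ → Ω → ℝ) (hadp : Adapted ℱ X)
    (hcont : ∀ ω, ContinuousOn (fun t => X t ω) (Icc 0 T))
    (htriv : ∀ s : Set Ω, MeasurableSet[ℱ 0] s → P s = 0 ∨ P s = 1)
    (hA : CondA P ℱ T X)
    (δ₀ : ℝ) (hδ₀ : 0 < δ₀) (f : ℝ → ℝ) (hf : Continuous f)
    (hbot : Tendsto f atBot atBot) (htop : Tendsto f atTop atTop)
    (hmin : ∃ d : ℝ, -δ₀ < d ∧ ∀ x y : ℝ, x ≤ y → d ≤ f y - f x) :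
    ∀ h ∈ Ioo (0:ℝ) T, ∀ (τ : Ω → ℝ) (hτ : IsStoppingTime ℱ (fun ω => (τ ω : WithTop ℝ))),
      (∀ ω, τ ω ∈ Ico (0:ℝ) (T - h)) →
      ∀ c₀ > (0:ℝ), ∀ j ∈ ({-1, 0, 1} : Set ℤ),
      ∀ᵐ ω ∂P, 0 < (P[(FXev (fun t ω' => f (X t ω')) T τ h δ₀ c₀ j).indicator
          (fun _ => (1:ℝ)) | hτ.measurableSpace]) ω := by
  obtain ⟨d, hd, hdm⟩ := hmin
  intro h hh τ hτ hτmem c₀ hc₀ j hj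
  have hh0 : 0 < h := hh.1
  have hhT : h < T := hh.2
  have hj3 : j = -1 ∨ j = 0 ∨ j = 1 := by simpa using hj
  -- the clamp function
  set φ : ℝ → ℝ := fun t => max 0 (min t T) with hφdef
  have hφc : Continuous φ := continuous_const.max (continuous_id.min continuous_const)
  have hφmem : ∀ t, φ t ∈ Icc (0:ℝ) T := fun t =>
    ⟨le_max_left _ _, max_le hT.le (min_le_right _ _)⟩
  have hφeq : ∀ t, 0 ≤ t → t ≤ T → φ t = t := by
    intro t h0 h1
    simp only [hφdef, min_eq_left h1, max_eq_right h0]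
  have hτ0 : ∀ ω, 0 ≤ τ ω := fun ω => (hτmem ω).1
  have hτT : ∀ ω, τ ω < T - h := fun ω => (hτmem ω).2
  have hτm : Measurable τ := measurable_of_Iic fun i => by
    simpa only [Set.preimage, Set.mem_Iic, WithTop.coe_le_coe] using ℱ.le i _ (hτ i)
  -- measurability of X_τ with respect to the stopping time σ-algebra
  have hXτ : Measurable[hτ.measurableSpace] fun ω => X (τ ω) ω := by
    set Y : ℝ → Ω → ℝ := fun t ω => X (φ t) ω with hYdef
    have hYc : ∀ ω, Continuous fun t => Y t ω :=
      fun ω => (hcont ω).comp_continuous hφc hφmem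
    set ℱ' : Filtration ℝ m :=
      ⟨fun t => ℱ (max 0 t), fun s t hst => ℱ.mono (max_le_max le_rfl hst),
        fun t => ℱ.le _⟩ with hℱ'def
    have hτ' : IsStoppingTime ℱ' (fun ω => (τ ω : WithTop ℝ)) := fun t => ℱ.mono (le_max_right 0 t) _ (hτ t)
    have hadp' : Adapted ℱ' Y := fun t =>
      (hadp (φ t)).mono (ℱ.mono (max_le_max le_rfl (min_le_left t T))) le_rfl
    have hprog : IsStronglyProgressive ℱ' Y :=
      StronglyAdapted.isStronglyProgressive_of_continuous (fun t => (hadp' t).stronglyMeasurable) hYc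
    have hsv : Measurable[hτ'.measurableSpace] (stoppedValue Y (fun ω => (τ ω : WithTop ℝ))) :=
      measurable_stoppedValue hprog hτ'
    have hspace : hτ'.measurableSpace = hτ.measurableSpace := by
      have hsup : (⨆ t, ℱ' t) = ⨆ t, ℱ t := le_antisymm
        (iSup_le fun t => le_iSup (fun t => ℱ t) (max 0 t))
        (iSup_le fun t => le_trans (ℱ.mono (le_max_right 0 t)) (le_iSup (fun t => ℱ' t) t))
      refine MeasurableSpace.ext fun s => ?_
      rw [IsStoppingTime.measurableSet, IsStoppingTime.measurableSet, hsup]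
      constructor
      · intro hs
        refine ⟨hs.1, fun i => ?_⟩
        rcases le_or_gt 0 i with h0 | h0
        · have h1 := hs.2 i
          have h2 : ℱ' i = ℱ i := by
            show ℱ (max 0 i) = ℱ i
            rw [max_eq_right h0]
          rwa [h2] at h1
        · have hemp : s ∩ {ω | ((τ ω : ℝ) : WithTop ℝ) ≤ (i : WithTop ℝ)} = ∅ := by
            ext ω
            simp only [mem_inter_iff, mem_setOf_eq, mem_empty_iff_false, iff_false, not_and]
            intro _ hτi
            exact absurd (le_trans (hτ0 ω) (WithTop.coe_le_coe.mp hτi)) (not_le.mpr h0)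
          rw [hemp]
          exact @MeasurableSet.empty _ (ℱ i)
      · intro hs
        exact ⟨hs.1, fun i => ℱ.mono (le_max_right 0 i) _ (hs.2 i)⟩
    rw [← hspace]
    have heq : (fun ω => X (τ ω) ω) = stoppedValue Y (fun ω => (τ ω : WithTop ℝ)) := by
      funext ω
      show X (τ ω) ω = X (φ (τ ω)) ω
      rw [hφeq _ (hτ0 ω) (by linarith [hτT ω])]
    rw [heq]
    exact hsv
  -- measurability of the events
  have hFmeas : ∀ g : ℝ → ℝ, Continuous g → ∀ δ c : ℝ,
      MeasurableSet (FXev (fun t ω' => g (X t ω')) T τ h δ c j) := by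
    intro g hg δ c
    set Y : ℝ → Ω → ℝ := fun t ω => g (X (φ t) ω) with hYdef
    have hYc : ∀ ω, Continuous fun t => Y t ω :=
      fun ω => hg.comp ((hcont ω).comp_continuous hφc hφmem)
    have hYm : ∀ t, Measurable (Y t) :=
      fun t => hg.measurable.comp ((hadp (φ t)).mono (ℱ.le _) le_rfl)
    have hunc : StronglyMeasurable (Function.uncurry Y) :=
      stronglyMeasurable_uncurry_of_continuous_of_stronglyMeasurable hYc
        fun t => (hYm t).stronglyMeasurable
    set w : Ω → ℝ → ℝ := fun ω t => Y (τ ω + t) ω - Y (τ ω) ω with hwdef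
    have hwc : ∀ ω, Continuous (w ω) := fun ω =>
      ((hYc ω).comp (continuous_const.add continuous_id)).sub continuous_const
    have hwm : ∀ r : ℝ, Measurable fun ω => w ω r := by
      intro r
      have h1 : Measurable fun ω => Y (τ ω + r) ω :=
        hunc.measurable.comp ((hτm.add_const r).prodMk measurable_id)
      have h2 : Measurable fun ω => Y (τ ω) ω :=
        hunc.measurable.comp (hτm.prodMk measurable_id)
      exact h1.sub h2
    have hween : ∀ ω t, 0 ≤ t → τ ω + t ≤ T →
        g (X (τ ω + t) ω) - g (X (τ ω) ω) = w ω t := by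
      intro ω t ht hT'
      have h1 : φ (τ ω + t) = τ ω + t := hφeq _ (by linarith [hτ0 ω]) hT'
      have h2 : φ (τ ω) = τ ω := hφeq _ (hτ0 ω) (by linarith [hτT ω, hh0])
      simp only [hwdef, hYdef, h1, h2]
    have hTsub : ∀ ω, h < T - τ ω := fun ω => by linarith [hτT ω]
    have himg1 : ∀ ω, (fun t => g (X (τ ω + t) ω) - g (X (τ ω) ω)) '' Icc 0 h
        = w ω '' Icc 0 h := by
      intro ω
      apply image_congr
      intro t ht
      exact hween ω t ht.1 (by linarith [hτT ω, ht.2])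
    have himg2 : ∀ ω, (fun t => g (X (τ ω + t) ω) - g (X (τ ω) ω)) '' Ico h (T - τ ω)
        = w ω '' Ico h (T - τ ω) := by
      intro ω
      apply image_congr
      intro t ht
      exact hween ω t (le_trans hh0.le ht.1) (by linarith [ht.2])
    have himg0 : ∀ ω, (fun t => |g (X (τ ω + t) ω) - g (X (τ ω) ω)|) '' Ico 0 (T - τ ω)
        = (fun t => |w ω t|) '' Ico 0 (T - τ ω) := by
      intro ω
      apply image_congr
      intro t ht
      rw [hween ω t ht.1 (by linarith [ht.2])]
    have hbddw : ∀ ω (A : Set ℝ), A ⊆ Icc 0 T →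
        BddAbove (w ω '' A) ∧ BddBelow (w ω '' A) ∧ BddAbove ((fun t => |w ω t|) '' A) := by
      intro ω A hA
      have hcomp : IsCompact (w ω '' Icc 0 T) := isCompact_Icc.image (hwc ω)
      have habs : IsCompact ((fun t => |w ω t|) '' Icc 0 T) := isCompact_Icc.image (hwc ω).abs
      exact ⟨BddAbove.mono (image_mono hA) hcomp.bddAbove,
        BddBelow.mono (image_mono hA) hcomp.bddBelow,
        BddAbove.mono (image_mono hA) habs.bddAbove⟩
    have hsub1 : Icc (0:ℝ) h ⊆ Icc 0 T := Icc_subset_Icc le_rfl hhT.le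
    have hsub2 : ∀ ω, Ico h (T - τ ω) ⊆ Icc 0 T := fun ω t ht =>
      ⟨le_trans hh0.le ht.1, by linarith [ht.2, hτ0 ω]⟩
    have hsub0 : ∀ ω, Ico (0:ℝ) (T - τ ω) ⊆ Icc 0 T := fun ω t ht =>
      ⟨ht.1, by linarith [ht.2, hτ0 ω]⟩
    rcases hj3 with rfl | rfl | rfl
    · have hset : FXev (fun t ω' => g (X t ω')) T τ h δ c (-1) =
          {ω | -δ < sInf (w ω '' Icc 0 h)} ∩ {ω | c < sInf (w ω '' Ico h (T - τ ω))} := by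
        unfold FXev
        rw [if_neg (by decide), if_neg (by decide)]
        ext ω
        simp only [mem_inter_iff, mem_setOf_eq]
        rw [himg1 ω, himg2 ω]
      rw [hset]
      refine MeasurableSet.inter ?_ ?_
      · exact measurableSet_lt_sInf w hwc (fun q => hwm q) (fun _ => Icc 0 h) 0 (fun _ => h)
          (fun _ => hh0) (fun _ => Ioo_subset_Icc_self) (fun _ => subset_rfl)
          (fun _ => ⟨le_rfl, hh0.le⟩) (fun ω => (hbddw ω _ hsub1).2.1)
          (fun q => MeasurableSet.const _) (-δ)
      · exact measurableSet_lt_sInf w hwc (fun q => hwm q) (fun ω => Ico h (T - τ ω)) h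
          (fun ω => T - τ ω) hTsub (fun ω => Ioo_subset_Ico_self) (fun ω => Ico_subset_Icc_self)
          (fun ω => ⟨le_rfl, hTsub ω⟩) (fun ω => (hbddw ω _ (hsub2 ω)).2.1)
          (fun q => by
            have : {ω | (q:ℝ) ∈ Ico h (T - τ ω)} = {ω | h ≤ (q:ℝ)} ∩ {ω | (q:ℝ) < T - τ ω} := by
              ext ω; simp [mem_Ico, and_comm]
            rw [this]
            exact (MeasurableSet.const _).inter
              (measurableSet_lt measurable_const (measurable_const.sub hτm))) c
    · have hset : FXev (fun t ω' => g (X t ω')) T τ h δ c 0 =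
          {ω | sSup ((fun t => |w ω t|) '' Ico 0 (T - τ ω)) < δ} := by
        unfold FXev
        rw [if_pos rfl]
        ext ω
        simp only [mem_setOf_eq]
        rw [himg0 ω]
      rw [hset]
      exact measurableSet_sSup_lt (fun ω t => |w ω t|) (fun ω => (hwc ω).abs)
        (fun q => (hwm q).abs) (fun ω => Ico 0 (T - τ ω)) 0 (fun ω => T - τ ω)
        (fun ω => by show (0:ℝ) < T - τ ω; linarith [hTsub ω]) (fun ω => Ioo_subset_Ico_self)
        (fun ω => Ico_subset_Icc_self)
        (fun ω => ⟨le_rfl, show (0:ℝ) < T - τ ω by linarith [hTsub ω]⟩)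
        (fun ω => (hbddw ω _ (hsub0 ω)).2.2)
        (fun q => by
          have : {ω | (q:ℝ) ∈ Ico 0 (T - τ ω)} = {ω | (0:ℝ) ≤ (q:ℝ)} ∩ {ω | (q:ℝ) < T - τ ω} := by
            ext ω; simp [mem_Ico, and_comm]
          rw [this]
          exact (MeasurableSet.const _).inter
            (measurableSet_lt measurable_const (measurable_const.sub hτm))) δ
    · have hset : FXev (fun t ω' => g (X t ω')) T τ h δ c 1 =
          {ω | sSup (w ω '' Icc 0 h) < δ} ∩ {ω | sSup (w ω '' Ico h (T - τ ω)) < -c} := by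
        unfold FXev
        rw [if_neg (by decide), if_pos rfl]
        ext ω
        simp only [mem_inter_iff, mem_setOf_eq]
        rw [himg1 ω, himg2 ω]
      rw [hset]
      refine MeasurableSet.inter ?_ ?_
      · exact measurableSet_sSup_lt w hwc (fun q => hwm q) (fun _ => Icc 0 h) 0 (fun _ => h)
          (fun _ => hh0) (fun _ => Ioo_subset_Icc_self) (fun _ => subset_rfl)
          (fun _ => ⟨le_rfl, hh0.le⟩) (fun ω => (hbddw ω _ hsub1).1)
          (fun q => MeasurableSet.const _) δ
      · exact measurableSet_sSup_lt w hwc (fun q => hwm q) (fun ω => Ico h (T - τ ω)) h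
          (fun ω => T - τ ω) hTsub (fun ω => Ioo_subset_Ico_self) (fun ω => Ico_subset_Icc_self)
          (fun ω => ⟨le_rfl, hTsub ω⟩) (fun ω => (hbddw ω _ (hsub2 ω)).1)
          (fun q => by
            have : {ω | (q:ℝ) ∈ Ico h (T - τ ω)} = {ω | h ≤ (q:ℝ)} ∩ {ω | (q:ℝ) < T - τ ω} := by
              ext ω; simp [mem_Ico, and_comm]
            rw [this]
            exact (MeasurableSet.const _).inter
              (measurableSet_lt measurable_const (measurable_const.sub hτm))) (-c)
  -- choice of constants for each n
  have hchoice : ∀ n : ℕ, ∃ δn cn : ℝ, 0 < δn ∧ δn ≤ 1 ∧ 0 < cn ∧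
      (∀ x y : ℝ, |x| ≤ (n:ℝ) + 1 → |y| ≤ (n:ℝ) + 1 → |x - y| < δn → |f x - f y| < δ₀ / 2) ∧
      (∀ x y : ℝ, |x| ≤ (n:ℝ) → y ≤ x - cn → f y ≤ f x - (c₀ + 1)) ∧
      (∀ x y : ℝ, |x| ≤ (n:ℝ) → x + cn ≤ y → f x + (c₀ + 1) ≤ f y) := by
    intro n
    have hucf : UniformContinuousOn f (Icc (-(n:ℝ) - 1) ((n:ℝ) + 1)) :=
      isCompact_Icc.uniformContinuousOn_of_continuous hf.continuousOn
    obtain ⟨ε, hε, hεp⟩ := Metric.uniformContinuousOn_iff.mp hucf (δ₀ / 2) (by positivity)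
    have hK : IsCompact (f '' Icc (-(n:ℝ)) n) := isCompact_Icc.image hf
    have hMn : ∀ x : ℝ, |x| ≤ (n:ℝ) → f x ≤ sSup (f '' Icc (-(n:ℝ)) n) := fun x hx =>
      le_csSup hK.bddAbove (mem_image_of_mem f ⟨(abs_le.mp hx).1, (abs_le.mp hx).2⟩)
    have hmn : ∀ x : ℝ, |x| ≤ (n:ℝ) → sInf (f '' Icc (-(n:ℝ)) n) ≤ f x := fun x hx =>
      csInf_le hK.bddBelow (mem_image_of_mem f ⟨(abs_le.mp hx).1, (abs_le.mp hx).2⟩)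
    obtain ⟨K₂, hK₂⟩ := eventually_atTop.mp
      (tendsto_atTop.mp htop (sSup (f '' Icc (-(n:ℝ)) n) + (c₀ + 1)))
    obtain ⟨K₁, hK₁⟩ := eventually_atBot.mp
      (tendsto_atBot.mp hbot (sInf (f '' Icc (-(n:ℝ)) n) - (c₀ + 1)))
    refine ⟨min ε 1, max 1 (max ((n:ℝ) - K₁) (K₂ + n)), lt_min hε one_pos, min_le_right _ _,
      lt_of_lt_of_le one_pos (le_max_left _ _), ?_, ?_, ?_⟩
    · intro x y hx hy hxy
      have hx' : x ∈ Icc (-(n:ℝ) - 1) ((n:ℝ) + 1) :=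
        ⟨by linarith [(abs_le.mp hx).1], (abs_le.mp hx).2⟩
      have hy' : y ∈ Icc (-(n:ℝ) - 1) ((n:ℝ) + 1) :=
        ⟨by linarith [(abs_le.mp hy).1], (abs_le.mp hy).2⟩
      have hd' : dist x y < ε := by
        rw [Real.dist_eq]
        exact lt_of_lt_of_le hxy (min_le_left _ _)
      have := hεp x hx' y hy' hd'
      rwa [Real.dist_eq] at this
    · intro x y hx hyx
      have hcn : (n:ℝ) - K₁ ≤ max 1 (max ((n:ℝ) - K₁) (K₂ + n)) :=
        le_trans (le_max_left _ _) (le_max_right _ _)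
      have hy : y ≤ K₁ := by linarith [(abs_le.mp hx).2]
      have h1 := hK₁ y hy
      have h2 := hmn x hx
      linarith
    · intro x y hx hxy
      have hcn : K₂ + (n:ℝ) ≤ max 1 (max ((n:ℝ) - K₁) (K₂ + n)) :=
        le_trans (le_max_right _ _) (le_max_right _ _)
      have hy : K₂ ≤ y := by linarith [(abs_le.mp hx).1]
      have h1 := hK₂ y hy
      have h2 := hMn x hx
      linarith
  choose δseq cseq hδpos hδle1 hcpos Hunif Hdown Hup using hchoice
  -- the inclusion of events
  have hincl : ∀ n : ℕ, ∀ ω, |X (τ ω) ω| ≤ (n:ℝ) →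
      ω ∈ FXev X T τ h (δseq n) (cseq n) j →
      ω ∈ FXev (fun t ω' => f (X t ω')) T τ h δ₀ c₀ j := by
    intro n ω hxn hω
    obtain ⟨hxl, hxr⟩ := abs_le.mp hxn
    have ha0 : 0 ≤ τ ω := hτ0 ω
    have haT : τ ω < T - h := hτT ω
    have hhTa : h < T - τ ω := by linarith
    have hcL : ContinuousOn (fun t => X (τ ω + t) ω) (Icc 0 (T - τ ω)) := by
      apply (hcont ω).comp (continuous_const.add continuous_id).continuousOn
      intro t ht
      show τ ω + t ∈ Icc 0 T
      exact ⟨by linarith [ht.1], by linarith [ht.2]⟩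
    obtain ⟨M, hM⟩ : ∃ M : ℝ, ∀ t ∈ Icc (0:ℝ) (T - τ ω), |X (τ ω + t) ω - X (τ ω) ω| ≤ M := by
      have hcpt : IsCompact ((fun t => |X (τ ω + t) ω - X (τ ω) ω|) '' Icc 0 (T - τ ω)) :=
        isCompact_Icc.image_of_continuousOn (hcL.sub continuousOn_const).abs
      obtain ⟨M, hM⟩ := hcpt.bddAbove
      exact ⟨M, fun t ht => hM (mem_image_of_mem _ ht)⟩
    have hsub1 : Icc (0:ℝ) h ⊆ Icc 0 (T - τ ω) := Icc_subset_Icc le_rfl (by linarith)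
    have hsub2 : Ico h (T - τ ω) ⊆ Icc 0 (T - τ ω) := fun t ht => ⟨by linarith [ht.1], ht.2.le⟩
    have hsub0 : Ico (0:ℝ) (T - τ ω) ⊆ Icc 0 (T - τ ω) := Ico_subset_Icc_self
    have hBA : ∀ S : Set ℝ, S ⊆ Icc 0 (T - τ ω) →
        BddAbove ((fun t => X (τ ω + t) ω - X (τ ω) ω) '' S) ∧
        BddBelow ((fun t => X (τ ω + t) ω - X (τ ω) ω) '' S) ∧
        BddAbove ((fun t => |X (τ ω + t) ω - X (τ ω) ω|) '' S) := by
      intro S hS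
      refine ⟨⟨M, ?_⟩, ⟨-M, ?_⟩, ⟨M, ?_⟩⟩
      · rintro x ⟨t, ht, rfl⟩
        show X (τ ω + t) ω - X (τ ω) ω ≤ M
        exact le_trans (le_abs_self _) (hM t (hS ht))
      · rintro x ⟨t, ht, rfl⟩
        show -M ≤ X (τ ω + t) ω - X (τ ω) ω
        have h1 := hM t (hS ht)
        have h2 := neg_abs_le (X (τ ω + t) ω - X (τ ω) ω)
        linarith
      · rintro x ⟨t, ht, rfl⟩
        show |X (τ ω + t) ω - X (τ ω) ω| ≤ M
        exact hM t (hS ht)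
    rcases hj3 with rfl | rfl | rfl
    · simp only [FXev, reduceIte, mem_setOf_eq] at hω ⊢
      obtain ⟨hω1, hω2⟩ := hω
      constructor
      · have hne : (Icc (0:ℝ) h).Nonempty := ⟨0, le_rfl, hh0.le⟩
        have hlb : min d (-(δ₀ / 2)) ≤
            sInf ((fun t => f (X (τ ω + t) ω) - f (X (τ ω) ω)) '' Icc 0 h) := by
          apply le_csInf (hne.image _)
          rintro x ⟨t, ht, rfl⟩
          show min d (-(δ₀ / 2)) ≤ f (X (τ ω + t) ω) - f (X (τ ω) ω)
          have hLt : -δseq n < X (τ ω + t) ω - X (τ ω) ω :=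
            lt_of_lt_of_le hω1 (csInf_le (hBA _ hsub1).2.1 (mem_image_of_mem _ ht))
          rcases le_or_gt (X (τ ω) ω) (X (τ ω + t) ω) with hle | hlt
          · exact le_trans (min_le_left _ _) (hdm _ _ hle)
          · have hy : |X (τ ω + t) ω| ≤ (n:ℝ) + 1 := by
              rw [abs_le]
              rw [abs_le] at hxn
              constructor
              · linarith [hδle1 n]
              · linarith
            have habs : |X (τ ω + t) ω - X (τ ω) ω| < δseq n := by
              rw [abs_lt]
              constructor <;> linarith
            have hu := Hunif n (X (τ ω + t) ω) (X (τ ω) ω) hy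
              (by rw [abs_le]; rw [abs_le] at hxn; constructor <;> linarith) habs
            have h2 := (abs_lt.mp hu).1
            exact le_trans (min_le_right _ _) (by linarith)
        have hgt : -δ₀ < min d (-(δ₀ / 2)) := lt_min hd (by linarith)
        linarith
      · have hne : (Ico h (T - τ ω)).Nonempty := ⟨h, le_rfl, hhTa⟩
        have hlb : c₀ + 1 ≤
            sInf ((fun t => f (X (τ ω + t) ω) - f (X (τ ω) ω)) '' Ico h (T - τ ω)) := by
          apply le_csInf (hne.image _)
          rintro x ⟨t, ht, rfl⟩
          show c₀ + 1 ≤ f (X (τ ω + t) ω) - f (X (τ ω) ω)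
          have hLt : cseq n < X (τ ω + t) ω - X (τ ω) ω :=
            lt_of_lt_of_le hω2 (csInf_le (hBA _ hsub2).2.1 (mem_image_of_mem _ ht))
          have := Hup n (X (τ ω) ω) (X (τ ω + t) ω) hxn (by linarith)
          linarith
        linarith
    · simp only [FXev, reduceIte, mem_setOf_eq] at hω ⊢
      have hne : (Ico (0:ℝ) (T - τ ω)).Nonempty := ⟨0, le_rfl, by linarith⟩
      have hub : sSup ((fun t => |f (X (τ ω + t) ω) - f (X (τ ω) ω)|) '' Ico 0 (T - τ ω))
          ≤ δ₀ / 2 := by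
        apply csSup_le (hne.image _)
        rintro x ⟨t, ht, rfl⟩
        show |f (X (τ ω + t) ω) - f (X (τ ω) ω)| ≤ δ₀ / 2
        have hLt : |X (τ ω + t) ω - X (τ ω) ω| < δseq n :=
          lt_of_le_of_lt (le_csSup (hBA _ hsub0).2.2 (mem_image_of_mem _ ht)) hω
        have hy : |X (τ ω + t) ω| ≤ (n:ℝ) + 1 := by
          have h1 := abs_add_le (X (τ ω) ω) (X (τ ω + t) ω - X (τ ω) ω)
          rw [add_sub_cancel] at h1
          linarith [hδle1 n]
        exact (Hunif n (X (τ ω + t) ω) (X (τ ω) ω) hy (by linarith) hLt).le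
      linarith
    · simp only [FXev, reduceIte, mem_setOf_eq] at hω ⊢
      obtain ⟨hω1, hω2⟩ := hω
      constructor
      · have hne : (Icc (0:ℝ) h).Nonempty := ⟨0, le_rfl, hh0.le⟩
        have hub : sSup ((fun t => f (X (τ ω + t) ω) - f (X (τ ω) ω)) '' Icc 0 h)
            ≤ max (-d) (δ₀ / 2) := by
          apply csSup_le (hne.image _)
          rintro x ⟨t, ht, rfl⟩
          show f (X (τ ω + t) ω) - f (X (τ ω) ω) ≤ max (-d) (δ₀ / 2)
          have hLt : X (τ ω + t) ω - X (τ ω) ω < δseq n :=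
            lt_of_le_of_lt (le_csSup (hBA _ hsub1).1 (mem_image_of_mem _ ht)) hω1
          rcases le_or_gt (X (τ ω + t) ω) (X (τ ω) ω) with hle | hlt
          · have := hdm _ _ hle
            exact le_trans (by linarith) (le_max_left _ _)
          · have hy : |X (τ ω + t) ω| ≤ (n:ℝ) + 1 := by
              rw [abs_le]
              rw [abs_le] at hxn
              constructor
              · linarith
              · linarith [hδle1 n]
            have habs : |X (τ ω + t) ω - X (τ ω) ω| < δseq n := by
              rw [abs_lt]
              constructor <;> linarith
            have hu := Hunif n (X (τ ω + t) ω) (X (τ ω) ω) hy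
              (by rw [abs_le]; rw [abs_le] at hxn; constructor <;> linarith) habs
            have h2 := (abs_lt.mp hu).2
            exact le_trans (by linarith) (le_max_right _ _)
        have hlt' : max (-d) (δ₀ / 2) < δ₀ := max_lt (by linarith) (by linarith)
        linarith
      · have hne : (Ico h (T - τ ω)).Nonempty := ⟨h, le_rfl, hhTa⟩
        have hub : sSup ((fun t => f (X (τ ω + t) ω) - f (X (τ ω) ω)) '' Ico h (T - τ ω))
            ≤ -(c₀ + 1) := by
          apply csSup_le (hne.image _)
          rintro x ⟨t, ht, rfl⟩
          show f (X (τ ω + t) ω) - f (X (τ ω) ω) ≤ -(c₀ + 1)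
          have hLt : X (τ ω + t) ω - X (τ ω) ω < -cseq n :=
            lt_of_le_of_lt (le_csSup (hBA _ hsub2).1 (mem_image_of_mem _ ht)) hω2
          have := Hdown n (X (τ ω) ω) (X (τ ω + t) ω) hxn (by linarith)
          linarith
        linarith
  -- conditional expectation argument
  have hGle : hτ.measurableSpace ≤ m := hτ.measurableSpace_le
  have hFf : MeasurableSet (FXev (fun t ω' => f (X t ω')) T τ h δ₀ c₀ j) := hFmeas f hf δ₀ c₀
  have hFfint : Integrable
      ((FXev (fun t ω' => f (X t ω')) T τ h δ₀ c₀ j).indicator fun _ => (1:ℝ)) P :=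
    (integrable_const 1).indicator hFf
  have hFn : ∀ n : ℕ, MeasurableSet (FXev X T τ h (δseq n) (cseq n) j) := fun n =>
    hFmeas id continuous_id (δseq n) (cseq n)
  have hAn : ∀ n : ℕ, MeasurableSet[hτ.measurableSpace]
      ((fun ω => X (τ ω) ω) ⁻¹' Icc (-(n:ℝ)) n) := fun n => hXτ measurableSet_Icc
  have h1 : ∀ n : ℕ, ∀ᵐ ω ∂P,
      0 < (P[(FXev X T τ h (δseq n) (cseq n) j).indicator (fun _ => (1:ℝ)) |
        hτ.measurableSpace]) ω :=
    fun n => hA h hh τ hτ hτmem (δseq n) (hδpos n) (cseq n) (hcpos n) j hj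
  have h2 : ∀ n : ℕ,
      (P[(((fun ω => X (τ ω) ω) ⁻¹' Icc (-(n:ℝ)) n) ∩ FXev X T τ h (δseq n) (cseq n) j).indicator
          (fun _ => (1:ℝ)) | hτ.measurableSpace])
        ≤ᵐ[P] (P[(FXev (fun t ω' => f (X t ω')) T τ h δ₀ c₀ j).indicator
          (fun _ => (1:ℝ)) | hτ.measurableSpace]) := by
    intro n
    refine condExp_mono ((integrable_const 1).indicator ((hGle _ (hAn n)).inter (hFn n)))
      hFfint (Eventually.of_forall fun ω => ?_)
    refine Set.indicator_le_indicator_of_subset ?_ (fun _ => zero_le_one) ω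
    intro ω' hω'
    exact hincl n ω' (abs_le.mpr ⟨hω'.1.1, hω'.1.2⟩) hω'.2
  have h3 : ∀ n : ℕ,
      (P[(((fun ω => X (τ ω) ω) ⁻¹' Icc (-(n:ℝ)) n) ∩ FXev X T τ h (δseq n) (cseq n) j).indicator
          (fun _ => (1:ℝ)) | hτ.measurableSpace])
        =ᵐ[P] ((fun ω => X (τ ω) ω) ⁻¹' Icc (-(n:ℝ)) n).indicator
          (P[(FXev X T τ h (δseq n) (cseq n) j).indicator (fun _ => (1:ℝ)) |
            hτ.measurableSpace]) := by
    intro n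
    have hci := condExp_indicator (μ := P) (m := hτ.measurableSpace)
      ((integrable_const (1:ℝ)).indicator (hFn n)) (hAn n)
    refine EventuallyEq.trans (EventuallyEq.of_eq ?_) hci
    rw [Set.indicator_indicator]
  filter_upwards [ae_all_iff.mpr h1, ae_all_iff.mpr h2, ae_all_iff.mpr h3] with ω H1 H2 H3
  obtain ⟨n, hn⟩ := exists_nat_ge |X (τ ω) ω|
  have hmem : ω ∈ (fun ω => X (τ ω) ω) ⁻¹' Icc (-(n:ℝ)) n :=
    ⟨(abs_le.mp hn).1, (abs_le.mp hn).2⟩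
  calc (0:ℝ)
      < (P[(FXev X T τ h (δseq n) (cseq n) j).indicator (fun _ => (1:ℝ)) |
          hτ.measurableSpace]) ω := H1 n
    _ = ((fun ω => X (τ ω) ω) ⁻¹' Icc (-(n:ℝ)) n).indicator
          (P[(FXev X T τ h (δseq n) (cseq n) j).indicator (fun _ => (1:ℝ)) |
            hτ.measurableSpace]) ω := (Set.indicator_of_mem hmem _).symm
    _ = (P[(((fun ω => X (τ ω) ω) ⁻¹' Icc (-(n:ℝ)) n) ∩
          FXev X T τ h (δseq n) (cseq n) j).indicator (fun _ => (1:ℝ)) |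
          hτ.measurableSpace]) ω := (H3 n).symm
    _ ≤ _ := H2 n

end
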